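/- Let M be a monoid with unique left inverses and let H be a finitely generated group, generated as a monoid by a finite set X. Then the word problem of H with respect to X is accepted by some deterministic M-automaton over X if and only if H has a subgroup of finite index that admits an injective group homomorphism into the group of units G(M) of M. -/

import Mathlib

/-- A monoid `M` has *unique left inverses* if whenever `b * a = 1 = c * a` we have `b = c`. -/
def UniqueLeftInverses (M : Type) [Monoid M] : Prop :=
  ∀ a b c : M, b * a = 1 → c * a = 1 → b = c

/-- The word problem of a group `H`, generated as a monoid by the image of `φ : X → H`,
is the set of words over `X` representing the identity of `H`. -/
def wordProblem {H : Type} [Group H] {X : Type} (φ : X → H) : Set (List X) :=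
  {w | (w.map φ).prod = 1}

/-- A deterministic `M`-automaton over the alphabet `X`: a finite directed graph with
a distinguished initial state, a set of terminal states, and edges labelled by pairs in
`M × X`, such that each state has at most one outgoing edge per letter of `X`. -/
structure DetMAutomaton (M : Type) [Monoid M] (X : Type) where
  State : Type
  [stateFintype : Fintype State]
  init : State
  terminal : Set State
  edge : State → M × X → State → Prop
  det : ∀ ⦃p : State⦄ ⦃x : X⦄ ⦃g h : M⦄ ⦃q r : State⦄,
      edge p (g, x) q → edge p (h, x) r → g = h ∧ q = r

namespace DetMAutomaton

variable {M : Type} [Monoid M] {X : Type}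

/-- `A.Path p m w q` means there is a path from `p` to `q` labelled `(m, w)`: the
`X`-components of its edge labels spell out `w` in order, and the `M`-components
multiply in order to `m`. -/
inductive Path (A : DetMAutomaton M X) : A.State → M → List X → A.State → Prop
  | nil (p : A.State) : Path A p 1 [] p
  | cons {p q r : A.State} {g h : M} {x : X} {w : List X} :
      A.edge p (g, x) q → Path A q h w r → Path A p (g * h) (x :: w) r

/-- The language accepted by a deterministic `M`-automaton: all words `w` such that some
path labelled `(1, w)` leads from the initial state to a terminal state. -/
def Lang (A : DetMAutomaton M X) : Set (List X) :=
  {w | ∃ q ∈ A.terminal, A.Path A.init 1 w q}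

/-- A deterministic `M`-automaton is *deterministic terminal state minimal* (DTSM) if no
deterministic `M`-automaton accepting the same language has strictly fewer terminal states. -/
def DTSM (A : DetMAutomaton M X) : Prop :=
  ∀ B : DetMAutomaton M X, B.Lang = A.Lang → Nat.card A.terminal ≤ Nat.card B.terminal

end DetMAutomaton

set_option linter.unusedSectionVars false

namespace DetMAutomaton

variable {M : Type} [Monoid M] {X : Type}

variable {A : DetMAutomaton M X}

lemma Path.determ : ∀ {w : List X} {p q q' : A.State} {m m' : M},
    A.Path p m w q → A.Path p m' w q' → m = m' ∧ q = q' := by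
  intro w
  induction w with
  | nil =>
    intro p q q' m m' h1 h2
    cases h1; cases h2; exact ⟨rfl, rfl⟩
  | cons x w ih =>
    intro p q q' m m' h1 h2
    cases h1 with
    | cons e1 p1 =>
      cases h2 with
      | cons e2 p2 =>
        obtain ⟨hg, hq⟩ := A.det e1 e2
        subst hg; subst hq
        obtain ⟨hm, hr⟩ := ih p1 p2
        exact ⟨by rw [hm], hr⟩

lemma Path.append {p q r : A.State} {m n : M} {w v : List X}
    (h1 : A.Path p m w q) (h2 : A.Path q n v r) : A.Path p (m * n) (w ++ v) r := by
  induction h1 with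
  | nil p => simpa using h2
  | cons e _ ih =>
    rw [List.cons_append, mul_assoc]
    exact Path.cons e (ih h2)

lemma Path.split : ∀ {w v : List X} {p r : A.State} {m : M}, A.Path p m (w ++ v) r →
    ∃ q a b, A.Path p a w q ∧ A.Path q b v r ∧ m = a * b := by
  intro w
  induction w with
  | nil =>
    intro v p r m h
    exact ⟨p, 1, m, Path.nil p, h, (one_mul m).symm⟩
  | cons x w ih =>
    intro v p r m h
    rw [List.cons_append] at h
    cases h with
    | cons e hp =>
      obtain ⟨q, a, b, h1, h2, h3⟩ := ih hp
      exact ⟨q, _ * a, b, Path.cons e h1, h2, by rw [h3, mul_assoc]⟩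


lemma Path.cons_inv {p r : A.State} {m : M} {x : X} {w : List X}
    (h : A.Path p m (x :: w) r) :
    ∃ q g h', A.edge p (g, x) q ∧ A.Path q h' w r ∧ m = g * h' := by
  cases h with
  | cons e hp => exact ⟨_, _, _, e, hp, rfl⟩

end DetMAutomaton

section Constr
variable {M : Type} [Monoid M] {H : Type} [Group H] {X : Type}
  (φ : X → H) (K : Subgroup H) [Fintype (H ⧸ K)] (f : K →* Mˣ)

noncomputable def nextSt (C : H ⧸ K) (x : X) : H ⧸ K :=
  QuotientGroup.mk ((φ x)⁻¹ * C.out)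

lemma nextSt_mem (C : H ⧸ K) (x : X) :
    (C.out)⁻¹ * φ x * (nextSt φ K C x).out ∈ K := by
  have h : (QuotientGroup.mk ((φ x)⁻¹ * C.out) : H ⧸ K)
      = QuotientGroup.mk ((nextSt φ K C x).out) :=
    ((nextSt φ K C x).out_eq').symm
  have := QuotientGroup.eq.mp h
  simpa [mul_assoc, mul_inv_rev] using this

noncomputable def runSt : List X → H ⧸ K → H ⧸ K
  | [], C => C
  | x :: w, C => runSt w (nextSt φ K C x)

noncomputable def valU : List X → H ⧸ K → Mˣ
  | [], _ => 1
  | x :: w, C => f ⟨_, nextSt_mem φ K C x⟩ * valU w (nextSt φ K C x)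

lemma mk_mul_congr {a b : H} (g : H)
    (h : (QuotientGroup.mk a : H ⧸ K) = QuotientGroup.mk b) :
    (QuotientGroup.mk (g * a) : H ⧸ K) = QuotientGroup.mk (g * b) := by
  apply QuotientGroup.eq.mpr
  have := QuotientGroup.eq.mp h
  simpa [mul_assoc, mul_inv_rev] using this

lemma runSt_spec : ∀ (w : List X) (C : H ⧸ K),
    runSt φ K w C = QuotientGroup.mk (((w.map φ).prod)⁻¹ * C.out) := by
  intro w
  induction w with
  | nil => intro C; simp [runSt, QuotientGroup.out_eq']
  | cons x w ih =>
    intro C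
    rw [runSt, ih, List.map_cons, List.prod_cons, mul_inv_rev, mul_assoc]
    exact mk_mul_congr K _ ((nextSt φ K C x).out_eq')

lemma run_mem (w : List X) (C : H ⧸ K) :
    (C.out)⁻¹ * (w.map φ).prod * (runSt φ K w C).out ∈ K := by
  have h : (QuotientGroup.mk (((w.map φ).prod)⁻¹ * C.out) : H ⧸ K)
      = QuotientGroup.mk ((runSt φ K w C).out) := by
    rw [QuotientGroup.out_eq', runSt_spec]
  have := QuotientGroup.eq.mp h
  simpa [mul_assoc, mul_inv_rev] using this

lemma valU_spec : ∀ (w : List X) (C : H ⧸ K),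
    valU φ K f w C = f ⟨_, run_mem φ K w C⟩ := by
  intro w
  induction w with
  | nil =>
    intro C
    rw [valU]
    symm
    rw [← map_one f]
    congr 1
    ext
    simp [runSt]
  | cons x w ih =>
    intro C
    rw [valU, ih, ← map_mul]
    congr 1
    ext
    push_cast
    show (C.out)⁻¹ * φ x * (nextSt φ K C x).out *
        ((nextSt φ K C x).out⁻¹ * (w.map φ).prod * (runSt φ K w (nextSt φ K C x)).out)
      = (C.out)⁻¹ * ((x :: w).map φ).prod * (runSt φ K (x :: w) C).out
    rw [List.map_cons, List.prod_cons]
    have : runSt φ K (x :: w) C = runSt φ K w (nextSt φ K C x) := rfl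
    rw [this]
    group

noncomputable def mkAut : DetMAutomaton M X where
  State := H ⧸ K
  stateFintype := inferInstance
  init := QuotientGroup.mk 1
  terminal := {QuotientGroup.mk 1}
  edge := fun C p D => D = nextSt φ K C p.2 ∧ p.1 = (f ⟨_, nextSt_mem φ K C p.2⟩ : M)
  det := by
    intro p x g h q r e1 e2
    exact ⟨e1.2.trans e2.2.symm, e1.1.trans e2.1.symm⟩

lemma mkAut_path_iff : ∀ (w : List X) (C : H ⧸ K) (m : M) (D : H ⧸ K),
    (mkAut φ K f).Path C m w D ↔ (D = runSt φ K w C ∧ m = (valU φ K f w C : M)) := by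
  intro w
  induction w with
  | nil =>
    intro C m D
    constructor
    · intro h
      obtain ⟨hm, hD⟩ := DetMAutomaton.Path.determ h (DetMAutomaton.Path.nil _)
      exact ⟨hD, hm⟩
    · rintro ⟨rfl, rfl⟩
      exact DetMAutomaton.Path.nil _
  | cons x w ih =>
    intro C m D
    constructor
    · intro h
      obtain ⟨q, g, h', e, hp, rfl⟩ := DetMAutomaton.Path.cons_inv h
      obtain ⟨hq, hg⟩ := e
      dsimp only at hq hg
      subst hq
      obtain ⟨hD, hm⟩ := (ih _ _ _).mp hp
      refine ⟨hD, ?_⟩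
      rw [hg, hm]
      rfl
    · rintro ⟨rfl, rfl⟩
      have hp : (mkAut φ K f).Path (nextSt φ K C x) (valU φ K f w (nextSt φ K C x) : M) w
          (runSt φ K w (nextSt φ K C x)) := (ih _ _ _).mpr ⟨rfl, rfl⟩
      have h2 := DetMAutomaton.Path.cons (A := mkAut φ K f)
        (p := C) (g := (f ⟨_, nextSt_mem φ K C x⟩ : M)) ⟨rfl, rfl⟩ hp
      exact h2

lemma mkAut_lang (hf : Function.Injective f) :
    (mkAut φ K f).Lang = wordProblem φ := by
  ext w
  have hinit : (mkAut φ K f).init = (QuotientGroup.mk 1 : H ⧸ K) := rfl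
  constructor
  · rintro ⟨q, hq, hp⟩
    rw [hinit] at hp
    have hq1 : q = (QuotientGroup.mk 1 : H ⧸ K) := hq
    obtain ⟨hD, hm⟩ := (mkAut_path_iff φ K f w _ _ _).mp hp
    have hrun : runSt φ K w (QuotientGroup.mk 1 : H ⧸ K) = QuotientGroup.mk 1 := by
      rw [← hD, hq1]
    have hval : valU φ K f w (QuotientGroup.mk 1) = 1 := Units.ext hm.symm
    rw [valU_spec] at hval
    have h1 : (⟨_, run_mem φ K w (QuotientGroup.mk 1)⟩ : K) = 1 := by
      apply hf
      rw [hval, map_one]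
    have hker : ((QuotientGroup.mk 1 : H ⧸ K).out)⁻¹ * (w.map φ).prod *
        ((runSt φ K w (QuotientGroup.mk 1)).out) = 1 := congrArg Subtype.val h1
    rw [hrun] at hker
    show (w.map φ).prod = 1
    have h3 := congrArg
      (fun z => (QuotientGroup.mk 1 : H ⧸ K).out * z * ((QuotientGroup.mk 1 : H ⧸ K).out)⁻¹) hker
    simpa [mul_assoc] using h3
  · intro hw
    have hw1 : (w.map φ).prod = 1 := hw
    refine ⟨QuotientGroup.mk 1, rfl, ?_⟩
    rw [hinit]
    have hrun : runSt φ K w (QuotientGroup.mk 1 : H ⧸ K) = QuotientGroup.mk 1 := by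
      rw [runSt_spec, hw1, inv_one, one_mul, QuotientGroup.out_eq']
    have hval : (valU φ K f w (QuotientGroup.mk 1) : M) = 1 := by
      rw [valU_spec]
      have h1 : (⟨_, run_mem φ K w (QuotientGroup.mk 1)⟩ : K) = 1 := by
        ext
        push_cast
        rw [hw1, hrun, mul_one]
        exact inv_mul_cancel _
      rw [h1, map_one, Units.val_one]
    rw [show (1 : M) = (valU φ K f w (QuotientGroup.mk 1) : M) from hval.symm]
    exact (mkAut_path_iff φ K f w _ _ _).mpr ⟨hrun.symm, rfl⟩

end Constr

section Fwd
open DetMAutomaton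

theorem forward_direction {M : Type} [Monoid M] (hM : UniqueLeftInverses M)
    {H : Type} [Group H] {X : Type} (φ : X → H)
    (hgen : ∀ h : H, ∃ w : List X, (w.map φ).prod = h)
    (A : DetMAutomaton M X) (hA : A.Lang = wordProblem φ) :
    ∃ K : Subgroup H, K.FiniteIndex ∧ ∃ f : K →* Mˣ, Function.Injective f := by
  classical
  letI : Fintype A.State := A.stateFintype
  have hW : ∀ w : List X, (w.map φ).prod = 1 ↔ ∃ q, q ∈ A.terminal ∧ A.Path A.init 1 w q := by
    intro w
    constructor
    · intro hw
      have : w ∈ A.Lang := by rw [hA]; exact hw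
      obtain ⟨q, hq, hp⟩ := this
      exact ⟨q, hq, hp⟩
    · rintro ⟨q, hq, hp⟩
      have : w ∈ A.Lang := ⟨q, hq, hp⟩
      rw [hA] at this
      exact this
  -- states reachable with value 1 by a word-problem word
  set U : Set A.State := {q | ∃ u : List X, (u.map φ).prod = 1 ∧ A.Path A.init 1 u q} with hU
  have hUinit : A.init ∈ U := ⟨[], by simp, Path.nil _⟩
  set F : A.State → Set A.State :=
    fun q => {r | ∃ v : List X, (v.map φ).prod = 1 ∧ A.Path q 1 v r} with hF
  have hselfF : ∀ q, q ∈ F q := fun q => ⟨[], by simp, Path.nil q⟩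
  have F1 : ∀ q ∈ U, ∀ v : List X, (v.map φ).prod = 1 → ∃ r, A.Path q 1 v r ∧ r ∈ U := by
    rintro q ⟨u, hu, hup⟩ v hv
    have huv : ((u ++ v).map φ).prod = 1 := by
      rw [List.map_append, List.prod_append, hu, hv, one_mul]
    obtain ⟨t, ht, htp⟩ := (hW _).mp huv
    obtain ⟨q', a, b, pa, pb, hab⟩ := htp.split
    obtain ⟨ha, hq'⟩ := Path.determ hup pa
    subst hq'
    have hb : b = 1 := by rw [← ha, one_mul] at hab; exact hab.symm
    subst hb
    exact ⟨t, pb, u ++ v, huv, by simpa using htp⟩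
  have hFU : ∀ q ∈ U, ∀ r ∈ F q, r ∈ U := by
    rintro q ⟨u, hu, hup⟩ r ⟨v, hv, hvp⟩
    refine ⟨u ++ v, ?_, by simpa using hup.append hvp⟩
    rw [List.map_append, List.prod_append, hu, hv, one_mul]
  have hFsub : ∀ q, ∀ r ∈ F q, F r ⊆ F q := by
    rintro q r ⟨v, hv, hvp⟩ s ⟨v', hv', hv'p⟩
    refine ⟨v ++ v', ?_, by simpa using hvp.append hv'p⟩
    rw [List.map_append, List.prod_append, hv, hv', one_mul]
  obtain ⟨q0, hq0U, hq0min⟩ :=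
    Set.exists_min_image U (fun q => (F q).ncard) (Set.toFinite _) ⟨A.init, hUinit⟩
  have P2 : ∀ r ∈ F q0, ∃ v : List X, (v.map φ).prod = 1 ∧ A.Path r 1 v q0 := by
    intro r hr
    have hUr : r ∈ U := hFU q0 hq0U r hr
    have hEq : F r = F q0 :=
      Set.eq_of_subset_of_ncard_le (hFsub q0 r hr) (hq0min r hUr) (Set.toFinite _)
    have : q0 ∈ F r := by rw [hEq]; exact hselfF q0
    exact this
  have P1fwd : ∀ w : List X, (w.map φ).prod = 1 → ∃ t ∈ F q0, A.Path q0 1 w t := by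
    intro w hw
    obtain ⟨r, hp, _⟩ := F1 q0 hq0U w hw
    exact ⟨r, ⟨w, hw, hp⟩, hp⟩
  have hterm : ∀ q ∈ U, q ∈ A.terminal := by
    rintro q ⟨u, hu, hp⟩
    obtain ⟨t, ht, htp⟩ := (hW u).mp hu
    rw [(Path.determ hp htp).2]
    exact ht
  have P1bwd : ∀ (w : List X) (t : A.State), t ∈ F q0 → A.Path q0 1 w t →
      (w.map φ).prod = 1 := by
    intro w t htF hp
    obtain ⟨u0, hu0, hu0p⟩ := id hq0U
    have hUt : t ∈ U := hFU q0 hq0U t htF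
    have hfull : A.Path A.init 1 (u0 ++ w) t := by simpa using hu0p.append hp
    have : ((u0 ++ w).map φ).prod = 1 := (hW _).mpr ⟨t, hterm t hUt, hfull⟩
    rwa [List.map_append, List.prod_append, hu0, one_mul] at this
  have Diamond : ∀ (w w' : List X) (a a' : M), A.Path q0 a w q0 → A.Path q0 a' w' q0 →
      (w.map φ).prod = (w'.map φ).prod → a = a' := by
    intro w w' a a' hpw hpw' hpr
    obtain ⟨v, hv⟩ := hgen ((w.map φ).prod)⁻¹
    have h1 : ((w ++ v).map φ).prod = 1 := by
      rw [List.map_append, List.prod_append, hv, mul_inv_cancel]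
    obtain ⟨t, htF, htp⟩ := P1fwd _ h1
    obtain ⟨q', c, d, pc, pd, hcd⟩ := htp.split
    obtain ⟨hca, hq'⟩ := Path.determ pc hpw
    subst hq'
    have h2 : ((w' ++ v).map φ).prod = 1 := by
      rw [List.map_append, List.prod_append, hv, ← hpr, mul_inv_cancel]
    obtain ⟨t2, ht2F, htp2⟩ := P1fwd _ h2
    obtain ⟨q'', c', d', pc', pd', hcd'⟩ := htp2.split
    obtain ⟨hca', hq''⟩ := Path.determ pc' hpw'
    subst hq''
    obtain ⟨hdd, _⟩ := Path.determ pd pd'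
    have had : a * d = 1 := hca ▸ hcd.symm
    have had' : a' * d = 1 := by rw [hdd]; exact hca' ▸ hcd'.symm
    exact hM d a a' had had' 
  -- the subgroup
  set K : Subgroup H :=
    { carrier := {h | ∃ w : List X, (w.map φ).prod = h ∧ ∃ m : M, A.Path q0 m w q0}
      one_mem' := ⟨[], by simp, 1, Path.nil q0⟩
      mul_mem' := by
        rintro a b ⟨w, hw, m, hp⟩ ⟨w', hw', m', hp'⟩
        exact ⟨w ++ w', by rw [List.map_append, List.prod_append, hw, hw'], m * m',
          hp.append hp'⟩
      inv_mem' := by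
        rintro a ⟨w, hw, m, hp⟩
        obtain ⟨v, hv⟩ := hgen a⁻¹
        have h1 : ((w ++ v).map φ).prod = 1 := by
          rw [List.map_append, List.prod_append, hw, hv, mul_inv_cancel]
        obtain ⟨t, htF, htp⟩ := P1fwd _ h1
        obtain ⟨q', c, d, pc, pd, hcd⟩ := htp.split
        obtain ⟨_, hq'⟩ := Path.determ pc hp
        subst hq'
        obtain ⟨v2, hv2, pv2⟩ := P2 t htF
        exact ⟨v ++ v2, by rw [List.map_append, List.prod_append, hv, hv2, mul_one], d * 1,
          pd.append pv2⟩ } with hKdef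
  have hmemK : ∀ z : H, z ∈ K ↔ ∃ w : List X, (w.map φ).prod = z ∧ ∃ m : M, A.Path q0 m w q0 :=
    fun z => Iff.rfl
  -- finite index
  have spec : ∀ h : H, ∃ p : List X × M × A.State,
      ((p.1.map φ).prod = h ∧ A.Path q0 p.2.1 p.1 p.2.2) := by
    intro h
    obtain ⟨w, hw⟩ := hgen h
    obtain ⟨v, hv⟩ := hgen h⁻¹
    have h1 : ((w ++ v).map φ).prod = 1 := by
      rw [List.map_append, List.prod_append, hw, hv, mul_inv_cancel]
    obtain ⟨t, htF, htp⟩ := P1fwd _ h1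
    obtain ⟨q', c, d, pc, pd, hcd⟩ := htp.split
    exact ⟨(w, c, q'), hw, pc⟩
  set ψ : H → A.State := fun h => (Classical.choose (spec h)).2.2 with hψ
  have ψspec : ∀ h : H, ∃ (w : List X) (m : M),
      (w.map φ).prod = h ∧ A.Path q0 m w (ψ h) := by
    intro h
    obtain ⟨h1, h2⟩ := Classical.choose_spec (spec h)
    exact ⟨_, _, h1, h2⟩
  have coset : ∀ g h : H, ψ h = ψ g → g * h⁻¹ ∈ K := by
    intro g h he
    obtain ⟨wh, mh, hwh, ph⟩ := ψspec h
    obtain ⟨wg, mg, hwg, pg⟩ := ψspec g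
    obtain ⟨v, hv⟩ := hgen h⁻¹
    have h1 : ((wh ++ v).map φ).prod = 1 := by
      rw [List.map_append, List.prod_append, hwh, hv, mul_inv_cancel]
    obtain ⟨t, htF, htp⟩ := P1fwd _ h1
    obtain ⟨q', c, d, pc, pd, hcd⟩ := htp.split
    obtain ⟨_, hq'⟩ := Path.determ pc ph
    subst hq'
    rw [he] at pd
    obtain ⟨v2, hv2, pv2⟩ := P2 t htF
    refine (hmemK _).mpr ⟨wg ++ (v ++ v2), ?_, mg * (d * 1), pg.append (pd.append pv2)⟩
    rw [List.map_append, List.prod_append, List.map_append, List.prod_append,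
      hwg, hv, hv2, mul_one]
  have hfin : Finite (H ⧸ K) := by
    apply Finite.of_injective (fun C : H ⧸ K => ψ ((Quotient.out C)⁻¹))
    intro C C' he
    have he' : ψ ((C.out)⁻¹) = ψ ((C'.out)⁻¹) := he
    have h1 : (C'.out)⁻¹ * ((C.out)⁻¹)⁻¹ ∈ K := coset _ _ he' 
    rw [inv_inv] at h1
    have h2 : (QuotientGroup.mk C'.out : H ⧸ K) = QuotientGroup.mk C.out :=
      QuotientGroup.eq.mpr h1
    rw [QuotientGroup.out_eq', QuotientGroup.out_eq'] at h2
    exact h2.symm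
  have hKfi : K.FiniteIndex := by
    haveI := hfin
    exact Subgroup.finiteIndex_of_finite_quotient
  -- the embedding
  have kspec : ∀ hh : K, ∃ p : List X × M,
      ((p.1.map φ).prod = (hh : H) ∧ A.Path q0 p.2 p.1 q0) := by
    intro hh
    obtain ⟨w, hw, m, hp⟩ := (hmemK _).mp hh.2
    exact ⟨(w, m), hw, hp⟩
  set lw : K → List X := fun hh => (Classical.choose (kspec hh)).1 with hlw
  set lm : K → M := fun hh => (Classical.choose (kspec hh)).2 with hlm
  have lspec : ∀ hh : K, ((lw hh).map φ).prod = (hh : H) ∧ A.Path q0 (lm hh) (lw hh) q0 :=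
    fun hh => Classical.choose_spec (kspec hh)
  have WD : ∀ (hh : K) (w : List X) (m : M), (w.map φ).prod = (hh : H) →
      A.Path q0 m w q0 → m = lm hh := by
    intro hh w m hw hp
    exact Diamond w (lw hh) m (lm hh) hp (lspec hh).2 (by rw [hw, (lspec hh).1])
  have lm_one : lm 1 = 1 :=
    (WD 1 [] 1 (by simp) (Path.nil q0)).symm
  have lm_mul : ∀ a b : K, lm (a * b) = lm a * lm b := by
    intro a b
    refine (WD (a * b) (lw a ++ lw b) (lm a * lm b) ?_ ((lspec a).2.append (lspec b).2)).symm
    rw [List.map_append, List.prod_append, (lspec a).1, (lspec b).1]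
    rfl
  have lm_inv : ∀ a : K, lm a * lm a⁻¹ = 1 := by
    intro a
    rw [← lm_mul, mul_inv_cancel, lm_one]
  have lm_inv' : ∀ a : K, lm a⁻¹ * lm a = 1 := by
    intro a
    rw [← lm_mul, inv_mul_cancel, lm_one]
  refine ⟨K, hKfi, ⟨⟨⟨fun a => ⟨lm a, lm a⁻¹, lm_inv a, lm_inv' a⟩, ?_⟩, ?_⟩, ?_⟩⟩
  · exact Units.ext lm_one
  · intro a b
    exact Units.ext (lm_mul a b)
  · rw [injective_iff_map_eq_one]
    intro a ha
    have h1 : lm a = 1 := congrArg Units.val ha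
    have hp : A.Path q0 1 (lw a) q0 := by rw [← h1]; exact (lspec a).2
    have h2 : ((lw a).map φ).prod = 1 := P1bwd (lw a) q0 (hselfF q0) hp
    have h3 : (a : H) = 1 := by rw [← (lspec a).1]; exact h2
    exact Subtype.ext (by simpa using h3)

end Fwd


/-- **Kambites, Theorem 1.** Let `M` be a monoid with unique left inverses and `H` a finitely
generated group, generated as a monoid by a finite set `X`. Then the word problem of `H` with
respect to `X` is accepted by a deterministic `M`-automaton if and only if `H` has a finite
index subgroup which embeds in the group of units of `M`. -/

theorem wordProblem_accepted_detMAutomaton_iff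
    {M : Type} [Monoid M] (hM : UniqueLeftInverses M)
    {H : Type} [Group H] {X : Type} [Fintype X] (φ : X → H)
    (hgen : ∀ h : H, ∃ w : List X, (w.map φ).prod = h) :
    (∃ A : DetMAutomaton M X, A.Lang = wordProblem φ) ↔
      (∃ K : Subgroup H, K.FiniteIndex ∧ ∃ f : K →* Mˣ, Function.Injective f) := by
  constructor
  · rintro ⟨A, hA⟩
    exact forward_direction hM φ hgen A hA
  · rintro ⟨K, hKfi, f, hf⟩
    haveI := hKfi
    haveI : Fintype (H ⧸ K) := Fintype.ofFinite _
    exact ⟨mkAut φ K f, mkAut_lang φ K f hf⟩
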